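/- Let P be a subfield of ℂ, C = P^× ∩ μ, a ∈ P nonzero, and k > 1 an integer. Then the following are equivalent: (i) a is k-simple in P; (ii) for every divisor m > 1 of k there is no α ∈ P and root of unity ε with a = α^m·ε; (iii) for every divisor m > 1 of k the image of a in the quotient group P^×/C has no m-th root in P^×/C. -/

import Mathlib

noncomputable section

/-- `x` is a root of unity in `ℂ`. -/
def IsRootOfUnity (x : ℂ) : Prop := ∃ n : ℕ, 0 < n ∧ x ^ n = 1

/-- `a` is `k`-simple in the subfield `P` of `ℂ` (for `k > 1`): `a ∈ P`, `a` is not a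
root of unity, and `a ^ d = b ^ k * ε` with `b ∈ P`, `ε` a root of unity, `d ∈ ℤ`
implies `k ∣ d`. -/
def IsKSimple (P : Subfield ℂ) (k : ℕ) (a : ℂ) : Prop :=
  a ∈ P ∧ a ≠ 0 ∧ ¬ IsRootOfUnity a ∧
  ∀ (b ε : ℂ) (d : ℤ), b ∈ P → IsRootOfUnity ε →
    a ^ d = b ^ (k : ℤ) * ε → (k : ℤ) ∣ d

lemma rou_ne_zero {x : ℂ} (h : IsRootOfUnity x) : x ≠ 0 := by
  obtain ⟨n, hn, h1⟩ := h
  intro h0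
  rw [h0, zero_pow hn.ne'] at h1
  exact one_ne_zero h1.symm

lemma rou_zpow {x : ℂ} (h : IsRootOfUnity x) (d : ℤ) : IsRootOfUnity (x ^ d) := by
  obtain ⟨n, hn, h1⟩ := h
  refine ⟨n, hn, ?_⟩
  rw [← zpow_natCast (x ^ d), ← zpow_mul, mul_comm, zpow_mul, zpow_natCast, h1, one_zpow]

lemma rou_of_pow {x : ℂ} {g : ℕ} (hg : 0 < g) (h : IsRootOfUnity (x ^ g)) :
    IsRootOfUnity x := by
  obtain ⟨n, hn, h1⟩ := h
  exact ⟨g * n, Nat.mul_pos hg hn, by rw [pow_mul, h1]⟩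

lemma mem_torsion_iff (P : Subfield ℂ) (u : (↥P)ˣ) :
    u ∈ CommGroup.torsion (↥P)ˣ ↔ IsRootOfUnity ((u : ↥P) : ℂ) := by
  constructor
  · intro h
    obtain ⟨n, hn, h1⟩ := isOfFinOrder_iff_pow_eq_one.mp h
    refine ⟨n, hn, ?_⟩
    have : ((((u ^ n : (↥P)ˣ) : ↥P)) : ℂ) = (((1 : (↥P)ˣ) : ↥P) : ℂ) := by rw [h1]
    push_cast at this
    exact this
  · rintro ⟨n, hn, h1⟩
    refine isOfFinOrder_iff_pow_eq_one.mpr ⟨n, hn, ?_⟩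
    ext
    push_cast
    exact_mod_cast h1

lemma one_to_two (P : Subfield ℂ) (a : (↥P)ˣ) (k : ℕ) (hk : 1 < k)
    (h : IsKSimple P k ((a : ↥P) : ℂ)) :
    ∀ m : ℕ, 1 < m → m ∣ k →
      ¬ ∃ α ε : ℂ, α ∈ P ∧ IsRootOfUnity ε ∧ ((a : ↥P) : ℂ) = α ^ m * ε := by
  rintro m hm hmk ⟨α, ε, hαP, hε, heq⟩
  obtain ⟨n, rfl⟩ := hmk
  have hn : 0 < n := Nat.pos_of_ne_zero fun h0 => by simp [h0] at hk
  have key : ((a : ↥P) : ℂ) ^ (n : ℤ) = α ^ ((m * n : ℕ) : ℤ) * ε ^ n := by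
    rw [zpow_natCast, zpow_natCast, heq, mul_pow, ← pow_mul]
  have hdvd := h.2.2.2 α (ε ^ n) n hαP (by
    obtain ⟨N, hN, h1⟩ := hε
    exact ⟨N, hN, by rw [← pow_mul, mul_comm, pow_mul, h1, one_pow]⟩) key
  have : (m * n : ℤ) ∣ (n : ℤ) := by exact_mod_cast hdvd
  have hle : (m * n : ℤ) ≤ n := Int.le_of_dvd (by exact_mod_cast hn) this
  nlinarith [hm, hn, hle]

lemma two_to_one (P : Subfield ℂ) (a : (↥P)ˣ) (k : ℕ) (hk : 1 < k)
    (h : ∀ m : ℕ, 1 < m → m ∣ k →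
      ¬ ∃ α ε : ℂ, α ∈ P ∧ IsRootOfUnity ε ∧ ((a : ↥P) : ℂ) = α ^ m * ε) :
    IsKSimple P k ((a : ↥P) : ℂ) := by
  set A : ℂ := ((a : ↥P) : ℂ) with hAdef
  have hA0 : A ≠ 0 := by
    simp only [hAdef, ne_eq, ZeroMemClass.coe_eq_zero]
    exact a.ne_zero
  have hAP : A ∈ P := SetLike.coe_mem _
  refine ⟨hAP, hA0, ?_, ?_⟩
  · intro hrou
    exact h k hk dvd_rfl ⟨1, A, one_mem P, hrou, by simp⟩
  · intro b ε d hbP hε heq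
    by_contra hkd
    -- gcd setup
    set g : ℕ := Int.gcd d (k : ℤ) with hgdef
    have hk0 : (k : ℤ) ≠ 0 := by positivity
    have hgpos : 0 < g := Int.gcd_pos_of_ne_zero_right d hk0
    have hgdvdk : g ∣ k := by
      have := Int.gcd_dvd_right (a := d) (b := (k : ℤ))
      exact_mod_cast this
    have hgdvdd : (g : ℤ) ∣ d := Int.gcd_dvd_left d (k : ℤ)
    obtain ⟨m, hkgm⟩ := hgdvdk
    have hm1 : 1 < m := by
      rcases Nat.lt_or_ge m 2 with hm | hm
      · exfalso
        have hm0 : m = 0 ∨ m = 1 := by omega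
        rcases hm0 with rfl | rfl
        · omega
        · apply hkd
          have hgk : g = k := by omega
          rw [← hgk]
          exact hgdvdd
      · omega
    have hmk : m ∣ k := ⟨g, by rw [hkgm, Nat.mul_comm]⟩
    -- Bezout
    set u : ℤ := Int.gcdA d (k : ℤ) with hu
    set v : ℤ := Int.gcdB d (k : ℤ) with hv
    have hbez : (g : ℤ) = d * u + (k : ℤ) * v := Int.gcd_eq_gcd_ab d (k : ℤ)
    have hb0 : b ≠ 0 := by
      intro h0
      rw [h0] at heq
      rw [zero_zpow _ hk0, zero_mul] at heq
      exact zpow_ne_zero d hA0 heq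
    set c : ℂ := b ^ u * A ^ v with hc
    have hc0 : c ≠ 0 := mul_ne_zero (zpow_ne_zero u hb0) (zpow_ne_zero v hA0)
    have hcP : c ∈ P := mul_mem (zpow_mem hbP u) (zpow_mem hAP v)
    have key : A ^ (g : ℤ) = c ^ (k : ℤ) * ε ^ u := by
      rw [hbez, zpow_add₀ hA0, zpow_mul, heq, mul_zpow, hc, mul_zpow,
        ← zpow_mul, ← zpow_mul, ← zpow_mul, mul_comm u (k : ℤ), mul_comm ((k:ℤ)) v]
      ring
    -- A^g = (c^m)^g * ε^u
    have key2 : A ^ (g : ℤ) = (c ^ m) ^ (g : ℤ) * ε ^ u := by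
      rw [key]
      congr 1
      rw [← zpow_natCast c m, ← zpow_mul]
      congr 1
      push_cast [hkgm]
      ring
    set ζ : ℂ := A / c ^ m with hζ
    have hcm0 : c ^ m ≠ 0 := pow_ne_zero m hc0
    have hζpow : ζ ^ (g : ℤ) = ε ^ u := by
      rw [hζ, div_zpow, key2, mul_comm, mul_div_assoc, div_self (zpow_ne_zero _ hcm0),
        mul_one]
    have hζrou : IsRootOfUnity ζ := by
      apply rou_of_pow hgpos
      rw [← zpow_natCast ζ g, hζpow]
      exact rou_zpow hε u
    have hAeq : A = c ^ m * ζ := by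
      rw [hζ]
      field_simp
    exact h m hm1 hmk ⟨c, ζ, hcP, hζrou, hAeq⟩

lemma exists_iff (P : Subfield ℂ) (a : (↥P)ˣ) (m : ℕ) (hm : 0 < m) :
    (∃ α ε : ℂ, α ∈ P ∧ IsRootOfUnity ε ∧ ((a : ↥P) : ℂ) = α ^ m * ε) ↔
    (∃ y : (↥P)ˣ ⧸ CommGroup.torsion (↥P)ˣ,
      y ^ m = (QuotientGroup.mk a : (↥P)ˣ ⧸ CommGroup.torsion (↥P)ˣ)) := by
  have hA0 : ((a : ↥P) : ℂ) ≠ 0 := by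
    simp only [ne_eq, ZeroMemClass.coe_eq_zero]
    exact a.ne_zero
  constructor
  · rintro ⟨α, ε, hαP, hε, heq⟩
    have hε0 : ε ≠ 0 := rou_ne_zero hε
    have hα0 : α ≠ 0 := by
      intro h0
      rw [h0, zero_pow hm.ne', zero_mul] at heq
      exact hA0 heq
    have hεP : ε ∈ P := by
      have hεeq : ε = ((a : ↥P) : ℂ) * (α ^ m)⁻¹ := by
        field_simp [heq]
        rw [heq]; ring
      rw [hεeq]
      exact mul_mem (SetLike.coe_mem _) (inv_mem (pow_mem hαP m))
    have hαP0 : (⟨α, hαP⟩ : ↥P) ≠ 0 := by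
      simp only [ne_eq, Subtype.ext_iff]
      exact hα0
    have hεP0 : (⟨ε, hεP⟩ : ↥P) ≠ 0 := by
      simp only [ne_eq, Subtype.ext_iff]
      exact hε0
    set uα : (↥P)ˣ := Units.mk0 _ hαP0 with huα
    set uε : (↥P)ˣ := Units.mk0 _ hεP0 with huε
    have key : uα ^ m * uε = a := by
      ext
      push_cast [huα, huε]
      exact heq.symm
    have htors : uε ∈ CommGroup.torsion (↥P)ˣ := by
      rw [mem_torsion_iff]
      exact hε
    refine ⟨QuotientGroup.mk uα, ?_⟩
    rw [← QuotientGroup.mk_pow, QuotientGroup.eq]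
    have : (uα ^ m)⁻¹ * a = uε := by
      rw [← key]
      group
    rw [this]
    exact htors
  · rintro ⟨y, hy⟩
    obtain ⟨w, rfl⟩ := QuotientGroup.mk_surjective y
    rw [← QuotientGroup.mk_pow, QuotientGroup.eq] at hy
    set t : (↥P)ˣ := (w ^ m)⁻¹ * a with ht
    have haeq : a = w ^ m * t := by
      rw [ht]
      group
    refine ⟨((w : ↥P) : ℂ), ((t : ↥P) : ℂ), SetLike.coe_mem _,
      (mem_torsion_iff P t).mp hy, ?_⟩
    have : (((w ^ m * t : (↥P)ˣ) : ↥P) : ℂ) = ((w : ↥P) : ℂ) ^ m * ((t : ↥P) : ℂ) := by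
      push_cast
      ring
    rw [← this, ← haeq]

/-- For `a ∈ Pˣ` and `k > 1` the following are equivalent:
(i) `a` is `k`-simple in `P`;
(ii) for every divisor `m > 1` of `k` there are no `α ∈ P` and root of unity `ε` with
`a = α ^ m * ε`;
(iii) for every divisor `m > 1` of `k` the image of `a` in `Pˣ/C`, `C = Pˣ ∩ μ` the
torsion subgroup, has no `m`-th root. -/
theorem ksimple_tfae
    (P : Subfield ℂ) (a : (↥P)ˣ) (k : ℕ) (hk : 1 < k) :
    (IsKSimple P k ((a : ↥P) : ℂ) ↔
      (∀ m : ℕ, 1 < m → m ∣ k →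
        ¬ ∃ α ε : ℂ, α ∈ P ∧ IsRootOfUnity ε ∧ ((a : ↥P) : ℂ) = α ^ m * ε)) ∧
    (IsKSimple P k ((a : ↥P) : ℂ) ↔
      (∀ m : ℕ, 1 < m → m ∣ k →
        ¬ ∃ y : (↥P)ˣ ⧸ CommGroup.torsion (↥P)ˣ,
          y ^ m = (QuotientGroup.mk a : (↥P)ˣ ⧸ CommGroup.torsion (↥P)ˣ))) := by
  have h12 : IsKSimple P k ((a : ↥P) : ℂ) ↔
      (∀ m : ℕ, 1 < m → m ∣ k →
        ¬ ∃ α ε : ℂ, α ∈ P ∧ IsRootOfUnity ε ∧ ((a : ↥P) : ℂ) = α ^ m * ε) :=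
    ⟨one_to_two P a k hk, two_to_one P a k hk⟩
  refine ⟨h12, h12.trans ?_⟩
  constructor
  · intro h m hm hmk hy
    exact h m hm hmk ((exists_iff P a m (by omega)).mpr hy)
  · intro h m hm hmk hy
    exact h m hm hmk ((exists_iff P a m (by omega)).mp hy)
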